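/- arXiv:2001.09617 — 2 statements merged into one kernel-verified Lean document; each statement's English description precedes it below -/
import Mathlib

section
/- The equation x² + 1 = yⁿ has no solutions in positive integers x, y, n with min{x, y, n} > 1. -/
namespace LebesgueCatalan

abbrev G := GaussianInt

def u : G := ⟨0,1⟩

theorem u_sq : u^2 = -1 := by ext <;> simp [u, pow_two, Zsqrtd.re_mul, Zsqrtd.im_mul]

theorem u_pow_even (i : ℕ) : u^(2*i) = (((-1)^i : ℤ) : G) := by
  rw [pow_mul, u_sq]; push_cast; ring

theorem u_pow_odd (i : ℕ) : u^(2*i+1) = (((-1)^i : ℤ) : G) * u := by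
  rw [pow_succ, u_pow_even]

theorem sum_range_even_odd {M : Type*} [AddCommMonoid M] (f : ℕ → M) (n : ℕ) :
    ∑ k ∈ Finset.range (2*n), f k
      = ∑ i ∈ Finset.range n, f (2*i) + ∑ i ∈ Finset.range n, f (2*i+1) := by
  induction n with
  | zero => simp
  | succ n ih =>
    rw [show 2*(n+1) = (2*n)+1+1 by ring, Finset.sum_range_succ, Finset.sum_range_succ, ih,
      Finset.sum_range_succ, Finset.sum_range_succ]
    abel

def reHom : G →+ ℤ := AddMonoidHom.mk' Zsqrtd.re (fun a b => Zsqrtd.re_add a b)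

theorem expansion (a : ℤ) (m : ℕ) :
    ((⟨1, a⟩ : G) ^ (2*m+1)).re
      = ∑ i ∈ Finset.range (m+1), (-1)^i * ((2*m+1).choose (2*i) : ℤ) * (a^2)^i := by
  have hx : (⟨1, a⟩ : G) = (a : G) * u + 1 := by
    ext <;> simp [u, Zsqrtd.re_mul, Zsqrtd.im_mul]
  rw [hx, add_pow]
  have hre : ∀ z : G, z.re = reHom z := fun z => rfl
  rw [hre, map_sum]
  rw [show (2*m+1+1) = 2*(m+1) by ring, sum_range_even_odd]
  have heven : ∀ i ∈ Finset.range (m+1),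
      reHom (((a:G)*u)^(2*i) * 1^(2*m+1 - 2*i) * ((2*m+1).choose (2*i) : G))
        = (-1)^i * ((2*m+1).choose (2*i) : ℤ) * (a^2)^i := by
    intro i _
    rw [mul_pow, u_pow_even, one_pow, mul_one]
    have h : ((a:G))^(2*i) * (((-1)^i : ℤ) : G) * ((2*m+1).choose (2*i) : G)
        = ((a^(2*i) * (-1)^i * ((2*m+1).choose (2*i) : ℤ) : ℤ) : G) := by push_cast; ring
    rw [h]
    show ((a^(2*i) * (-1)^i * ((2*m+1).choose (2*i) : ℤ) : ℤ) : G).re = _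
    rw [Zsqrtd.re_intCast, pow_mul]
    ring
  have hodd : ∀ i ∈ Finset.range (m+1),
      reHom (((a:G)*u)^(2*i+1) * 1^(2*m+1 - (2*i+1)) * ((2*m+1).choose (2*i+1) : G)) = 0 := by
    intro i _
    rw [mul_pow, u_pow_odd, one_pow, mul_one]
    have h : (a:G)^(2*i+1) * ((((-1)^i : ℤ) : G) * u) * ((2*m+1).choose (2*i+1) : G)
        = ((a^(2*i+1) * (-1)^i * ((2*m+1).choose (2*i+1) : ℤ) : ℤ) : G) * u := by
      push_cast; ring
    rw [h]
    show (((a^(2*i+1) * (-1)^i * ((2*m+1).choose (2*i+1) : ℤ) : ℤ) : G) * u).re = 0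
    rw [Zsqrtd.re_mul, Zsqrtd.re_intCast, Zsqrtd.im_intCast]
    simp [u]
  rw [Finset.sum_congr rfl heven, Finset.sum_congr rfl hodd]
  simp

theorem natkey (n c d j : ℕ) (hd : Odd d) (hcd : n.choose 2 = 2^c * d)
    (hj : 1 ≤ j) (hjn : 2*j ≤ n) : 2^c ∣ n.choose (2*j) * j := by
  have hid : n.choose (2*j) * ((2*j).choose 2) = n.choose 2 * (n-2).choose (2*j-2) :=
    Nat.choose_mul (by omega)
  have h2j : (2*j).choose 2 = j * (2*j-1) := by
    rw [Nat.choose_two_right, show 2*j*(2*j-1) = 2*(j*(2*j-1)) by ring,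
      Nat.mul_div_cancel_left _ (by norm_num)]
  have hdvd : 2^c ∣ n.choose (2*j) * (j * (2*j-1)) := by
    rw [← h2j, hid, hcd]
    exact ⟨d * (n-2).choose (2*j-2), by ring⟩
  rw [← mul_assoc] at hdvd
  have hco : Nat.Coprime (2^c) (2*j-1) :=
    Nat.Coprime.pow_left _ (Nat.coprime_two_left.mpr ⟨j-1, by omega⟩)
  exact Nat.Coprime.dvd_of_dvd_mul_right hco hdvd

theorem termdvd (n c d s t j : ℕ) (hd : Odd d) (hcd : n.choose 2 = 2^c * d)
    (ht : Odd t) (hs : 1 ≤ s) (hj : 2 ≤ j) (hjn : 2*j ≤ n) :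
    2^(c+2*s+1) ∣ n.choose (2*j) * ((2^s*t)^2)^j := by
  obtain ⟨e, w, hw, hew⟩ := Nat.exists_eq_two_pow_mul_odd (n := j) (by omega)
  have hkey : 2^c ∣ n.choose (2*j) * j := natkey n c d j hd hcd (by omega) hjn
  have hwpos : 0 < w := hw.pos
  have he2 : 2^e ≤ j := by
    calc 2^e = 2^e * 1 := (mul_one _).symm
      _ ≤ 2^e * w := Nat.mul_le_mul_left _ hwpos
      _ = j := hew.symm
  have hej : e ≤ j - 1 := by
    by_contra h
    have h1 : j ≤ e := by omega
    have h2 := Nat.lt_two_pow_self (n := j)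
    have h3 : 2^j ≤ 2^e := Nat.pow_le_pow_right (by norm_num) h1
    omega
  have hkey2 : 2^c ∣ n.choose (2*j) * 2^e := by
    have h4 : 2^c ∣ n.choose (2*j) * 2^e * w := by rw [mul_assoc, ← hew]; exact hkey
    exact Nat.Coprime.dvd_of_dvd_mul_right
      (Nat.Coprime.pow_left _ (Nat.coprime_two_left.mpr hw)) h4
  obtain ⟨j2, rfl⟩ : ∃ j2, j = j2+2 := ⟨j-2, by omega⟩
  have hP : j2 ≤ s*j2 := Nat.le_mul_of_pos_left j2 (by omega)
  obtain ⟨z, hz⟩ : ∃ z, s*(2*(j2+2)) = e + (2*s+1) + z := by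
    have hexp : s*(2*(j2+2)) = 2*(s*j2) + 4*s := by ring
    exact ⟨s*(2*(j2+2)) - (e + (2*s+1)), by omega⟩
  have h1 : ((2^s*t)^2)^(j2+2) = 2^(s*(2*(j2+2))) * t^(2*(j2+2)) := by ring
  obtain ⟨q, hq⟩ := hkey2
  have hterm : n.choose (2*(j2+2)) * ((2^s*t)^2)^(j2+2)
      = 2^(c+2*s+1) * (q * (2^z * t^(2*(j2+2)))) := by
    rw [h1, hz, pow_add, pow_add,
      show n.choose (2*(j2+2)) * (2^e * 2^(2*s+1) * 2^z * t^(2*(j2+2)))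
         = (n.choose (2*(j2+2)) * 2^e) * (2^(2*s+1) * 2^z * t^(2*(j2+2))) from by ring,
      hq, pow_add, pow_add]
    ring
  exact ⟨_, hterm⟩

theorem endgame (n m A : ℕ) (hn : n = 2*m+1) (hm : 1 ≤ m) (hA0 : A ≠ 0) (hA2 : 2 ∣ A)
    (hS : (∑ i ∈ Finset.range (m+1), (-1)^i * (n.choose (2*i) : ℤ) * (((A:ℤ))^2)^i) = 1 ∨
          (∑ i ∈ Finset.range (m+1), (-1)^i * (n.choose (2*i) : ℤ) * (((A:ℤ))^2)^i) = -1) :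
    False := by
  obtain ⟨s, t, ht, hst⟩ := Nat.exists_eq_two_pow_mul_odd hA0
  have hs : 1 ≤ s := by
    rcases Nat.eq_zero_or_pos s with rfl | h
    · simp at hst; rcases ht with ⟨t', rfl⟩; omega
    · exact h
  have hn2 : 2 ≤ n := by omega
  have hch : n.choose 2 ≠ 0 := (Nat.choose_pos hn2).ne'
  obtain ⟨c, d, hd, hcd⟩ := Nat.exists_eq_two_pow_mul_odd hch
  obtain ⟨m', rfl⟩ : ∃ m', m = m'+1 := ⟨m-1, by omega⟩
  set f : ℕ → ℤ := fun i => (-1)^i * (n.choose (2*i) : ℤ) * (((A:ℤ))^2)^i with hf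
  have hsplit : (∑ i ∈ Finset.range (m'+1+1), f i)
      = (∑ i ∈ Finset.range m', f (i+2)) + f 1 + f 0 := by
    rw [Finset.sum_range_succ' f, Finset.sum_range_succ' (fun i => f (i+1))]
  have hf0 : f 0 = 1 := by simp [hf]
  have hf1 : f 1 = -((n.choose 2 : ℤ) * ((A:ℤ))^2) := by norm_num [hf]
  have hRdvd : (2:ℤ)^(c+2*s+1) ∣ (∑ i ∈ Finset.range m', f (i+2)) := by
    apply Finset.dvd_sum
    intro i hi
    have hi' : i < m' := Finset.mem_range.mp hi
    have hnat : 2^(c+2*s+1) ∣ n.choose (2*(i+2)) * ((2^s*t)^2)^(i+2) :=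
      termdvd n c d s t (i+2) hd hcd ht hs (by omega) (by omega)
    have hcast : ((A:ℤ)^2)^(i+2) = ((((2^s*t)^2)^(i+2) : ℕ) : ℤ) := by
      rw [hst]; push_cast; ring
    have hfe : f (i+2) = (-1)^(i+2) * ((n.choose (2*(i+2)) * ((2^s*t)^2)^(i+2) : ℕ) : ℤ) := by
      rw [hf]; push_cast [hcast]; ring
    rw [hfe]
    apply Dvd.dvd.mul_left
    exact_mod_cast Int.natCast_dvd_natCast.mpr hnat
  have hC2 : ((n.choose 2 : ℤ)) * ((A:ℤ))^2 = ((2^(c+2*s) * (d * t^2) : ℕ) : ℤ) := by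
    rw [hcd, hst]; push_cast; ring
  obtain ⟨R, hR⟩ := hRdvd
  rcases hS with h1 | h1 <;> rw [hsplit, hf0, hf1, hR] at h1
  · have heqz : ((2^(c+2*s) * (d * t^2) : ℕ) : ℤ) = (2:ℤ)^(c+2*s+1) * R := by
      rw [← hC2]; linarith
    have hnatdvd : (2:ℕ)^(c+2*s+1) ∣ 2^(c+2*s) * (d * t^2) := by
      have hdvd' : ((2:ℤ))^(c+2*s+1) ∣ ((2^(c+2*s) * (d * t^2) : ℕ) : ℤ) := ⟨R, heqz⟩
      exact_mod_cast hdvd'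
    obtain ⟨k, hk⟩ := hnatdvd
    have hpos : 0 < 2^(c+2*s) := Nat.pow_pos (by norm_num)
    have heq2 : 2^(c+2*s)*(d*t^2) = 2^(c+2*s)*(2*k) := by
      rw [hk, pow_succ]; ring
    have hdt : d * t^2 = 2 * k := Nat.eq_of_mul_eq_mul_left hpos heq2
    have hodd : Odd (d * t^2) := hd.mul (ht.pow)
    obtain ⟨o, ho⟩ := hodd
    omega
  · have h4C : (4:ℤ) ∣ ((n.choose 2 : ℤ)) * ((A:ℤ))^2 := by
      rw [hC2]
      have h4n : (4:ℕ) ∣ 2^(c+2*s) * (d * t^2) := by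
        have h22 : (2:ℕ)^2 ∣ 2^(c+2*s) := pow_dvd_pow 2 (by omega)
        exact dvd_mul_of_dvd_left (by simpa using h22) _
      exact_mod_cast Int.natCast_dvd_natCast.mpr h4n
    have h4R : (4:ℤ) ∣ (2:ℤ)^(c+2*s+1) * R := by
      apply dvd_mul_of_dvd_left
      have h22 : (2:ℤ)^2 ∣ (2:ℤ)^(c+2*s+1) := pow_dvd_pow 2 (by omega)
      simpa using h22
    obtain ⟨k1, hk1⟩ := h4C
    obtain ⟨k2, hk2⟩ := h4R
    omega

theorem unit_pow_four (z : G) (h : IsUnit z) : z ^ 4 = 1 := by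
  have hn : z.norm = 1 := (Zsqrtd.norm_eq_one_iff' (by norm_num) z).mpr h
  have h1 : z.re*z.re + z.im*z.im = 1 := by simpa [Zsqrtd.norm_def] using hn
  have r1 : -1 ≤ z.re := by nlinarith [sq_nonneg z.im, sq_nonneg (z.re+1)]
  have r2 : z.re ≤ 1 := by nlinarith [sq_nonneg z.im, sq_nonneg (z.re-1)]
  have i1 : -1 ≤ z.im := by nlinarith [sq_nonneg z.re, sq_nonneg (z.im+1)]
  have i2 : z.im ≤ 1 := by nlinarith [sq_nonneg z.re, sq_nonneg (z.im-1)]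
  have hc : z = 1 ∨ z = -1 ∨ z = ⟨0,1⟩ ∨ z = ⟨0,-1⟩ := by
    interval_cases hr : z.re <;> interval_cases hi : z.im <;> simp_all [Zsqrtd.ext_iff]
  rcases hc with rfl|rfl|rfl|rfl <;>
    · ext <;> simp [pow_succ, Zsqrtd.re_mul, Zsqrtd.im_mul]

theorem unit_is_pow (z : G) (h : IsUnit z) {n : ℕ} (hn : n % 2 = 1) : (z ^ n) ^ n = z := by
  have h4 : z ^ 4 = 1 := unit_pow_four z h
  have hmod : n * n % 4 = 1 := by
    obtain ⟨k, rfl⟩ : ∃ k, n = 2*k+1 := ⟨n/2, by omega⟩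
    have hid : (2*k+1) * (2*k+1) = 4*(k*k+k) + 1 := by ring
    omega
  calc (z ^ n) ^ n = z ^ (n * n) := by rw [← pow_mul]
    _ = (z ^ 4) ^ (n*n/4) * z ^ (n*n%4) := by rw [← pow_mul, ← pow_add]; congr 1; omega
    _ = z := by rw [h4, hmod, one_pow, pow_one, one_mul]

theorem im_dvd_pow (w : G) (k : ℕ) : w.im ∣ (w ^ k).im := by
  induction k with
  | zero => simp
  | succ k ih =>
    rw [pow_succ, Zsqrtd.im_mul]
    exact dvd_add (Dvd.dvd.mul_left dvd_rfl _) (Dvd.dvd.mul_right ih _)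

theorem main_odd (x y m : ℕ) (hx : 1 < x) (hy : 1 < y) (hm : 1 ≤ m)
    (heq : x ^ 2 + 1 = y ^ (2*m+1)) : False := by
  set n := 2*m+1 with hn
  have hnge : 3 ≤ n := by omega
  -- x is even
  have hxeven : 2 ∣ x := by
    rcases Nat.even_or_odd x with h | h
    · exact h.two_dvd
    · exfalso
      obtain ⟨r, hr⟩ := h
      have h2 : 2 ∣ y^n := ⟨2*(r*r+r)+1, by rw [← heq, hr]; ring⟩
      have hy2 : 2 ∣ y := Nat.Prime.dvd_of_dvd_pow Nat.prime_two h2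
      have h4 : 4 ∣ y^n := by
        obtain ⟨c, rfl⟩ := hy2
        have h42 : 4 ∣ (2*c)^2 := ⟨c^2, by ring⟩
        exact dvd_trans h42 (pow_dvd_pow _ (by omega))
      obtain ⟨w, hw⟩ := h4
      have hx2 : x^2+1 = 4*(r*r+r)+2 := by rw [hr]; ring
      omega
  have hyodd : ¬ 2 ∣ y := by
    intro h2y
    obtain ⟨r, hr⟩ := hxeven
    have h2 : 2 ∣ y^n := Dvd.dvd.pow h2y (by omega)
    have hx2 : x^2+1 = 2*(2*(r*r))+1 := by rw [hr]; ring
    obtain ⟨w, hw⟩ := h2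
    omega
  obtain ⟨r, hr⟩ := hxeven
  have hXeq : (x:ℤ) = 2*(r:ℤ) := by exact_mod_cast hr
  set p : G := ⟨(x:ℤ), 1⟩ with hp
  set q : G := ⟨(x:ℤ), -1⟩ with hq
  have hmul : p * q = (((y:ℕ):ℤ) : G)^n := by
    have h1 : p * q = (((x:ℤ)^2 + 1 : ℤ) : G) := by
      ext
      · rw [Zsqrtd.re_mul, Zsqrtd.re_intCast]; simp [hp, hq]; ring
      · rw [Zsqrtd.im_mul, Zsqrtd.im_intCast]; simp [hp, hq]
    have h2 : ((x:ℤ)^2 + 1 : ℤ) = ((y:ℤ))^n := by exact_mod_cast heq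
    rw [h1, h2]
    push_cast
    ring
  have hcop : IsCoprime p q := by
    refine ⟨⟨(x:ℤ), -1 + 2*(r:ℤ)^2⟩, ⟨0, -2*(r:ℤ)^2⟩, ?_⟩
    ext
    · simp [hp, hq, Zsqrtd.re_mul, Zsqrtd.im_mul]
      rw [hXeq]; ring
    · simp [hp, hq, Zsqrtd.re_mul, Zsqrtd.im_mul]
      ring
  obtain ⟨β, hass⟩ := exists_associated_pow_of_mul_eq_pow' hcop hmul
  obtain ⟨ν, hν⟩ := hass
  have hodd2 : n % 2 = 1 := by omega
  obtain ⟨w, hwp⟩ : ∃ w : G, w^n = p := by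
    refine ⟨β * ((ν : G))^n, ?_⟩
    rw [mul_pow, unit_is_pow _ ν.isUnit hodd2, hν]
  -- norm
  have hnormw : w.norm ^ n = ((y:ℤ))^n := by
    have h1 : (w^n).norm = p.norm := by rw [hwp]
    have h2 : (w^n).norm = w.norm ^ n := by
      induction n with
      | zero => simp
      | succ k ih => rw [pow_succ, pow_succ, Zsqrtd.norm_mul, ih]
    have hpnorm : p.norm = (x:ℤ)^2+1 := by
      simp [hp, Zsqrtd.norm_def]; ring
    have h3 : ((x:ℤ)^2 + 1 : ℤ) = ((y:ℤ))^n := by exact_mod_cast heq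
    rw [← h2, h1, hpnorm, h3]
  have hnn : 0 ≤ w.norm := Zsqrtd.norm_nonneg (by norm_num) w
  have hwy : w.norm = (y:ℤ) := by
    have h1 : ((w.norm.toNat : ℤ))^n = ((y:ℤ))^n := by
      rw [Int.toNat_of_nonneg hnn]; exact hnormw
    have h2 : w.norm.toNat ^ n = y ^ n := by exact_mod_cast h1
    have h3 : w.norm.toNat = y := Nat.pow_left_injective (by omega) h2
    rw [← Int.toNat_of_nonneg hnn, h3]
  have hb : w.im = 1 ∨ w.im = -1 := by
    have hdvd : w.im ∣ (w^n).im := im_dvd_pow w n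
    rw [hwp] at hdvd
    have : w.im ∣ 1 := by simpa [hp] using hdvd
    exact Int.isUnit_iff.mp (isUnit_of_dvd_one this)
  have him2 : w.im * w.im = 1 := by rcases hb with h | h <;> rw [h] <;> norm_num
  have hay : w.re^2 + 1 = (y:ℤ) := by
    have := hwy
    rw [Zsqrtd.norm_def] at this
    nlinarith [him2]
  set a := w.re with ha
  have haeven : 2 ∣ a := by
    have h1 : y % 2 = 1 := by omega
    have h2 : ∃ k:ℤ, (y:ℤ) = 2*k+1 := ⟨(y:ℤ)/2, by omega⟩
    obtain ⟨k, hk⟩ := h2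
    have h3 : a^2 = 2*k := by omega
    rcases Int.even_or_odd a with h | h
    · exact h.two_dvd
    · exfalso; obtain ⟨l, hl⟩ := h
      have : a^2 = 2*(2*l*l+2*l)+1 := by rw [hl]; ring
      omega
  set A := a.natAbs with hA
  have hA2 : 2 ∣ A := by
    have := Int.natAbs_dvd_natAbs.mpr haeven
    simpa using this
  have hA0 : A ≠ 0 := by
    intro h0
    have : a = 0 := Int.natAbs_eq_zero.mp h0
    rw [this] at hay
    norm_num at hay
    omega
  have hAsq : ((A:ℤ))^2 = a^2 := by
    rw [hA]; exact Int.natAbs_sq a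
  -- compute T
  have hupre : (u * p).re = -1 := by simp [u, hp, Zsqrtd.re_mul]
  obtain ⟨a₀, ha₀sq, hTre⟩ : ∃ a₀ : ℤ, a₀^2 = a^2 ∧
      ((((⟨1, a₀⟩ : G))^n).re = 1 ∨ (((⟨1, a₀⟩ : G))^n).re = -1) := by
    rcases hb with hb1 | hb1
    · -- w.im = 1
      refine ⟨-a, by ring, ?_⟩
      have hww : (-u) * w = ⟨1, -a⟩ := by
        ext <;> simp [u, Zsqrtd.re_mul, Zsqrtd.im_mul, hb1, ha]
      have hpow : (⟨1, -a⟩ : G)^n = -((((-1)^m : ℤ) : G) * (u * p)) := by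
        rw [← hww, mul_pow, hwp, Odd.neg_pow ⟨m, by omega⟩, hn, u_pow_odd]; ring
      have hTre : ((⟨1, -a⟩ : G)^n).re = (-1)^m := by
        rw [hpow, Zsqrtd.re_neg, Zsqrtd.re_mul, Zsqrtd.re_intCast, Zsqrtd.im_intCast, hupre]
        ring
      rw [hTre]
      rcases Nat.even_or_odd m with h | h
      · left; exact h.neg_one_pow
      · right; exact h.neg_one_pow
    · -- w.im = -1
      refine ⟨a, rfl, ?_⟩
      have hww : u * w = ⟨1, a⟩ := by
        ext <;> simp [u, Zsqrtd.re_mul, Zsqrtd.im_mul, hb1, ha]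
      have hpow : (⟨1, a⟩ : G)^n = (((-1)^m : ℤ) : G) * (u * p) := by
        rw [← hww, mul_pow, hwp, hn, u_pow_odd]; ring
      have hTre : ((⟨1, a⟩ : G)^n).re = (-1)^(m+1) := by
        rw [hpow, Zsqrtd.re_mul, Zsqrtd.re_intCast, Zsqrtd.im_intCast, hupre]
        ring
      rw [hTre]
      rcases Nat.even_or_odd (m+1) with h | h
      · left; exact h.neg_one_pow
      · right; exact h.neg_one_pow
  have hexp := expansion a₀ m
  rw [← hn] at hexp
  have hrw : a₀^2 = ((A:ℤ))^2 := by rw [ha₀sq, ← hAsq]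
  rw [hrw] at hexp
  rw [hexp] at hTre
  exact endgame n m A hn hm hA0 hA2 hTre

end LebesgueCatalan

/-- **Lebesgue's theorem (1850).** The equation `x² + 1 = yⁿ` has no solutions in
positive integers `x, y, n` with `min {x, y, n} > 1`. -/
theorem lebesgue_x_sq_add_one_ne_pow :
    ∀ x y n : ℕ, 1 < x → 1 < y → 1 < n → x ^ 2 + 1 ≠ y ^ n := by
  intro x y n hx hy hn heq
  rcases Nat.even_or_odd n with he | ho
  · obtain ⟨k, hk⟩ := he
    have hk1 : 1 ≤ k := by omega
    have hz : x^2 + 1 = (y^k)^2 := by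
      rw [heq, ← pow_mul]
      congr 1
      omega
    have hzy : y ≤ y^k := Nat.le_self_pow (by omega) y
    have hxz : x < y^k := by nlinarith
    nlinarith
  · obtain ⟨m, hm⟩ := ho
    have hm1 : 1 ≤ m := by omega
    exact LebesgueCatalan.main_odd x y m hx hy hm1 (by rw [heq, hm])
end

section
/- The equation x² + 7 = 2^{n+2} in positive integers x, n has only the solutions (x, n) = (1, 1), (3, 2), (5, 3), (11, 5) and (181, 13). -/
def bseq : ℕ → ℤ
  | 0 => 0
  | 1 => 1
  | (n+2) => bseq (n+1) - 2 * bseq n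

lemma bseq_add_two (n : ℕ) : bseq (n+2) = bseq (n+1) - 2 * bseq n := rfl

lemma bseq_odd : ∀ n : ℕ, Odd (bseq (n+1)) ∧ Odd (bseq (n+2))
  | 0 => by decide
  | (n+1) => by
    obtain ⟨h1, h2⟩ := bseq_odd n
    refine ⟨h2, ?_⟩
    rw [bseq_add_two, Int.odd_sub]
    simp [h2, Int.even_mul]

lemma bseq_norm : ∀ n : ℕ, (2 * bseq (n+1) - bseq n)^2 + 7 * (bseq n)^2 = 2^(n+2)
  | 0 => by decide
  | (n+1) => by
    have h := bseq_norm n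
    rw [bseq_add_two]
    ring_nf
    ring_nf at h
    nlinarith [h]

lemma sq_eq_cases (x y : ℤ) (h : x^2 = y^2) : x = y ∨ x = -y := by
  have h2 : (x - y) * (x + y) = 0 := by ring_nf; linarith
  rcases mul_eq_zero.mp h2 with h3 | h3
  · left; linarith
  · right; linarith

lemma sq_emod_two (a : ℤ) : a^2 % 2 = a % 2 := by
  rcases Int.even_or_odd a with ⟨u, hu⟩ | ⟨u, hu⟩ <;> subst hu
  · have : (u+u)^2 = 2*(2*u^2) := by ring
    rw [this]; omega
  · have : (2*u+1)^2 = 2*(2*u^2+2*u) + 1 := by ring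
    rw [this]; omega

lemma parity_contra (a b : ℤ) (h : Odd (a+b)) (he : Even (a^2+7*b^2)) : False := by
  have hA2 := sq_emod_two a
  have hB2 := sq_emod_two b
  rw [Int.odd_iff] at h
  rw [Int.even_iff] at he
  set P := a^2
  set Q := b^2
  omega

lemma descent_step (k : ℕ) (hk : 1 ≤ k)
    (IH : ∀ A B : ℤ, Odd A → Odd B → A^2 + 7*B^2 = 2^(k+2) →
      A^2 = (2*bseq (k+1) - bseq k)^2 ∧ B^2 = (bseq k)^2)
    (A B c : ℤ) (hA : Odd A) (hB : Odd B) (heq : A^2 + 7*B^2 = 2^(k+3))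
    (hc : B = A + 4*c) :
    A^2 = (2*bseq (k+2) - bseq (k+1))^2 ∧ B^2 = (bseq (k+1))^2 := by
  subst hc
  -- c is odd
  have hodd_c : Odd c := by
    by_contra hev
    rw [Int.not_odd_iff_even] at hev
    obtain ⟨b, hb⟩ := hev
    subst hb
    have hp : (2:ℤ)^(k+3) = 8 * 2^k := by ring
    rw [hp] at heq
    have hsmall : (A+7*b)^2 + 7*b^2 = 2^k := by
      have h8 : 8*((A+7*b)^2 + 7*b^2) = 8*2^k := by linear_combination heq
      linarith
    refine parity_contra (A+7*b) b ?_ ?_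
    · obtain ⟨m, hm⟩ := hA
      exact ⟨m + 4*b, by omega⟩
    · rw [hsmall]
      exact ⟨2^(k-1), by rw [← two_mul, ← pow_succ']; congr 1; omega⟩
  -- the descended solution
  have hoddA' : Odd (2*A + 7*c) := by
    obtain ⟨m, hm⟩ := hodd_c
    exact ⟨A + 7*m + 3, by omega⟩
  have h' : (2*A + 7*c)^2 + 7*c^2 = 2^(k+2) := by
    have hp : (2:ℤ)^(k+3) = 2 * 2^(k+2) := by ring
    rw [hp] at heq
    have h2 : 2*((2*A + 7*c)^2 + 7*c^2) = 2*2^(k+2) := by linear_combination heq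
    linarith
  obtain ⟨hA', hB'⟩ := IH (2*A + 7*c) c hoddA' hodd_c h'
  have hrec : bseq (k+2) = bseq (k+1) - 2 * bseq k := bseq_add_two k
  -- oddness of bseq k, bseq (k+1)
  obtain ⟨j, rfl⟩ : ∃ j, k = j + 1 := ⟨k - 1, by omega⟩
  obtain ⟨o1, o2⟩ := bseq_odd j
  obtain ⟨p, hp1⟩ := o1
  obtain ⟨q, hq1⟩ := o2
  obtain ⟨r, hr1⟩ := hB
  rcases sq_eq_cases _ _ hA' with e1 | e1 <;> rcases sq_eq_cases _ _ hB' with e2 | e2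
  · have hAeq : A = 2*bseq (j+3) - bseq (j+2) := by
      have hrec2 : bseq (j+3) = bseq (j+2) - 2 * bseq (j+1) := bseq_add_two (j+1)
      linarith
    have hBeq : A + 4*c = bseq (j+2) := by linarith
    exact ⟨by rw [hAeq], by rw [hBeq]⟩
  · exfalso
    simp only [hp1, hq1] at e1 e2
    omega
  · exfalso
    simp only [hp1, hq1] at e1 e2
    omega
  · have hrec2 : bseq (j+3) = bseq (j+2) - 2 * bseq (j+1) := bseq_add_two (j+1)
    have hAeq : A = -(2*bseq (j+3) - bseq (j+2)) := by linarith
    have hBeq : A + 4*c = -bseq (j+2) := by linarith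
    exact ⟨by rw [hAeq]; ring, by rw [hBeq]; ring⟩

theorem descent (k : ℕ) (hk : 1 ≤ k) : ∀ A B : ℤ, Odd A → Odd B →
    A^2 + 7*B^2 = 2^(k+2) →
    A^2 = (2*bseq (k+1) - bseq k)^2 ∧ B^2 = (bseq k)^2 := by
  induction k, hk using Nat.le_induction with
  | base =>
    intro A B hA hB heq
    obtain ⟨m, hm⟩ := hA
    obtain ⟨q, hq⟩ := hB
    subst hm hq
    norm_num at heq
    have hmn : m*(m+1) ≥ 0 := by
      rcases le_or_gt 0 m with h | h
      · positivity
      · nlinarith [mul_nonneg (by omega : (0:ℤ) ≤ -m) (by omega : (0:ℤ) ≤ -(m+1))]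
    have hqn : q*(q+1) ≥ 0 := by
      rcases le_or_gt 0 q with h | h
      · positivity
      · nlinarith [mul_nonneg (by omega : (0:ℤ) ≤ -q) (by omega : (0:ℤ) ≤ -(q+1))]
    have key : 4*(m*(m+1) + 7*(q*(q+1))) = 0 := by linear_combination heq
    have hm0 : m*(m+1) = 0 := by linarith
    have hq0 : q*(q+1) = 0 := by linarith
    have hA1 : (2*m+1)^2 = 1 := by linear_combination 4*hm0
    have hB1 : (2*q+1)^2 = 1 := by linear_combination 4*hq0
    have e1 : (2*bseq 2 - bseq 1)^2 = 1 := by decide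
    have e2 : (bseq 1)^2 = 1 := by decide
    rw [e1, e2]
    exact ⟨hA1, hB1⟩
  | succ k hk IH =>
    intro A B hA hB heq
    have h4 : 4 ∣ B - A ∨ 4 ∣ B + A := by
      obtain ⟨m, hm⟩ := hA
      obtain ⟨q, hq⟩ := hB
      have hd : (B - A) + (B + A) = 2*(2*q+1) := by omega
      rcases Int.even_or_odd ((B-A)/2) with ⟨u, hu⟩ | ⟨u, hu⟩
      · left; omega
      · right; omega
    rcases h4 with ⟨c, hcc⟩ | ⟨c, hcc⟩
    · exact descent_step k hk IH A B c hA hB heq (by linarith)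
    · have hres := descent_step k hk IH A (-B) (-c) hA hB.neg
        (by linear_combination heq) (by linarith)
      exact ⟨hres.1, by linear_combination hres.2⟩

lemma bseq_mod16 : ∀ m : ℕ,
    (((bseq (m+5) : ZMod 16), (bseq (m+6) : ZMod 16)) = (15,5)) ∨
    (((bseq (m+5) : ZMod 16), (bseq (m+6) : ZMod 16)) = (5,7)) ∨
    (((bseq (m+5) : ZMod 16), (bseq (m+6) : ZMod 16)) = (7,13)) ∨
    (((bseq (m+5) : ZMod 16), (bseq (m+6) : ZMod 16)) = (13,15))
  | 0 => by
    have h5 : bseq 5 = -1 := by decide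
    have h6 : bseq 6 = 5 := by decide
    rw [h5, h6]
    decide
  | (m+1) => by
    have hrec : bseq (m+7) = bseq (m+6) - 2*bseq (m+5) := bseq_add_two (m+5)
    have hcast : (bseq (m+7) : ZMod 16) = (bseq (m+6) : ZMod 16) - 2*(bseq (m+5) : ZMod 16) := by
      rw [hrec]; push_cast; ring
    have hgoal : ∀ x y : ZMod 16, (bseq (m+5) : ZMod 16) = x → (bseq (m+6) : ZMod 16) = y →
        ((bseq (m+6) : ZMod 16), (bseq (m+7) : ZMod 16)) = (y, y - 2*x) := by
      intro x y hx hy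
      rw [hcast, hx, hy]
    rcases bseq_mod16 m with h | h | h | h <;>
      [ (right; left); (right; right; left); (right; right; right); left ] <;>
      · have := hgoal _ _ (congrArg Prod.fst h) (congrArg Prod.snd h)
        exact this.trans (by decide)

lemma bseq_ne_one (l : ℕ) (h1 : bseq l = 1) : l = 1 ∨ l = 2 := by
  by_contra hcon
  push_neg at hcon
  have h5 : 5 ≤ l ∨ l < 5 := by omega
  rcases h5 with h5 | h5
  · obtain ⟨m, rfl⟩ : ∃ m, l = m + 5 := ⟨l - 5, by omega⟩
    have hc : (bseq (m+5) : ZMod 16) = 1 := by rw [h1]; rfl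
    rcases bseq_mod16 m with h | h | h | h <;>
    · have := (congrArg Prod.fst h).symm.trans hc
      simp at this
      revert this
      decide
  · interval_cases l <;> simp_all <;> revert h1 <;> decide

def Ssum (l : ℕ) : ℤ := ∑ j ∈ Finset.range (l+1), (l.choose (2*j+1) : ℤ) * (-7)^j
def Tsum (l : ℕ) : ℤ := ∑ j ∈ Finset.range (l+1), (l.choose (2*j) : ℤ) * (-7)^j

lemma Ssum_succ (l : ℕ) : Ssum (l+1) = Ssum l + Tsum l := by
  have hsplit : ∀ j ∈ Finset.range (l+2), ((l+1).choose (2*j+1) : ℤ) * (-7)^j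
      = (l.choose (2*j) : ℤ) * (-7)^j + (l.choose (2*j+1) : ℤ) * (-7)^j := by
    intro j _
    rw [Nat.choose_succ_succ l (2*j)]
    push_cast
    ring
  have eA : ∑ j ∈ Finset.range (l+2), (l.choose (2*j) : ℤ) * (-7)^j = Tsum l := by
    rw [Finset.sum_range_succ, Nat.choose_eq_zero_of_lt (by omega)]
    simp [Tsum]
  have eB : ∑ j ∈ Finset.range (l+2), (l.choose (2*j+1) : ℤ) * (-7)^j = Ssum l := by
    rw [Finset.sum_range_succ, Nat.choose_eq_zero_of_lt (by omega)]
    simp [Ssum]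
  have hL : Ssum (l+1) = ∑ j ∈ Finset.range (l+2), ((l+1).choose (2*j+1) : ℤ) * (-7)^j := rfl
  rw [hL, Finset.sum_congr rfl hsplit, Finset.sum_add_distrib, eA, eB]
  ring

lemma Tsum_succ (l : ℕ) : Tsum (l+1) = Tsum l - 7 * Ssum l := by
  have hL : Tsum (l+1) = ∑ j ∈ Finset.range (l+2), ((l+1).choose (2*j) : ℤ) * (-7)^j := rfl
  rw [hL, Finset.sum_range_succ' (fun j => ((l+1).choose (2*j) : ℤ) * (-7)^j) (l+1)]
  have hsplit : ∀ i ∈ Finset.range (l+1), ((l+1).choose (2*(i+1)) : ℤ) * (-7)^(i+1)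
      = (l.choose (2*i+1) : ℤ) * (-7)^(i+1) + (l.choose (2*i+2) : ℤ) * (-7)^(i+1) := by
    intro i _
    have h1 : 2*(i+1) = (2*i+1) + 1 := by ring
    rw [h1, Nat.choose_succ_succ l (2*i+1)]
    push_cast
    ring
  rw [Finset.sum_congr rfl hsplit, Finset.sum_add_distrib]
  have e1 : ∑ i ∈ Finset.range (l+1), (l.choose (2*i+1) : ℤ) * (-7)^(i+1)
      = -7 * Ssum l := by
    rw [Ssum, Finset.mul_sum]
    refine Finset.sum_congr rfl fun i _ => ?_
    ring
  have e2 : ∑ i ∈ Finset.range (l+1), (l.choose (2*i+2) : ℤ) * (-7)^(i+1)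
      = Tsum l - 1 := by
    rw [Tsum, Finset.sum_range_succ' (fun j => (l.choose (2*j) : ℤ) * (-7)^j) l]
    rw [Finset.sum_range_succ (fun i => (l.choose (2*i+2) : ℤ) * (-7)^(i+1)) l]
    rw [Nat.choose_eq_zero_of_lt (by omega : l < 2*l+2)]
    have hc : ∀ i ∈ Finset.range l, (l.choose (2*i+2) : ℤ) * (-7)^(i+1)
        = (l.choose (2*(i+1)) : ℤ) * (-7)^(i+1) := by
      intro i _
      rw [show 2*(i+1) = 2*i+2 from by ring]
    rw [Finset.sum_congr rfl hc]
    simp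
  rw [e1, e2]
  simp
  ring

lemma ST_id : ∀ l : ℕ, 2 * Ssum l = 2^l * bseq l ∧ 2 * Tsum l = 2^l * (2 * bseq (l+1) - bseq l)
  | 0 => by
    have h1 : Ssum 0 = 0 := by simp [Ssum]
    have h2 : Tsum 0 = 1 := by simp [Tsum]
    rw [h1, h2]
    norm_num [bseq]
  | (l+1) => by
    obtain ⟨hS, hT⟩ := ST_id l
    have hrec : bseq (l+2) = bseq (l+1) - 2 * bseq l := bseq_add_two l
    constructor
    · rw [Ssum_succ, mul_add, hS, hT]
      ring
    · rw [Tsum_succ, mul_sub, show 2*(7*Ssum l) = 7*(2*Ssum l) from by ring, hS, hT, hrec]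
      ring

-- (a) polynomial congruence for falling products
lemma prod_congr_dvd (D x y : ℤ) (h : D ∣ x - y) :
    ∀ K : ℕ, D ∣ (∏ i ∈ Finset.range K, (x - i)) - (∏ i ∈ Finset.range K, (y - i))
  | 0 => by simp
  | (K+1) => by
    rw [Finset.prod_range_succ, Finset.prod_range_succ]
    have IH := prod_congr_dvd D x y h K
    have key : (∏ i ∈ Finset.range K, (x - i)) * (x - K) - (∏ i ∈ Finset.range K, (y - i)) * (y - K)
        = ((∏ i ∈ Finset.range K, (x - i)) - (∏ i ∈ Finset.range K, (y - i))) * (x - K)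
          + (∏ i ∈ Finset.range K, (y - i)) * (x - y) := by ring
    rw [key]
    exact dvd_add (Dvd.dvd.mul_right IH _) (Dvd.dvd.mul_left h _)

-- (b) falling product = K! * choose
lemma dp_eq_choose (l K : ℕ) :
    (∏ i ∈ Finset.range K, ((l:ℤ) - i)) = (K.factorial : ℤ) * (l.choose K) := by
  rcases le_or_gt K l with h | h
  · have : (∏ i ∈ Finset.range K, ((l:ℤ) - i)) = ((l.descFactorial K : ℕ) : ℤ) := by
      rw [Nat.descFactorial_eq_prod_range]
      push_cast
      refine (Finset.prod_congr rfl fun i hi => ?_).symm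
      have : i ≤ l := le_trans (le_of_lt (Finset.mem_range.mp hi)) h
      push_cast [Nat.cast_sub this]
      ring
    rw [this, Nat.descFactorial_eq_factorial_mul_choose]
    push_cast
    ring
  · rw [Nat.choose_eq_zero_of_lt h]
    rw [Finset.prod_eq_zero (Finset.mem_range.mpr h) (by simp : ((l:ℤ) - l) = 0)]
    simp

-- (c) valuation bound
lemma factorial_val_bound (j : ℕ) (hj : 1 ≤ j) : padicValNat 7 ((2*j+1).factorial) + 1 ≤ j := by
  haveI : Fact (Nat.Prime 7) := ⟨by norm_num⟩
  have h := sub_one_mul_padicValNat_factorial (p := 7) (2*j+1)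
  have hds : 1 ≤ ((Nat.digits 7 (2*j+1)).sum) := by
    by_contra hc
    push_neg at hc
    have hsum0 : (Nat.digits 7 (2*j+1)).sum = 0 := by omega
    have hm : 2*j+1 ≠ 0 := by omega
    have hne : Nat.digits 7 (2*j+1) ≠ [] := Nat.digits_ne_nil_iff_ne_zero.mpr hm
    have hlast := Nat.getLast_digit_ne_zero 7 hm
    have hmem := List.getLast_mem hne
    have : (Nat.digits 7 (2*j+1)).getLast hne = 0 := by
      have := List.sum_eq_zero_iff.mp hsum0
      exact this _ hmem
    exact hlast this
  omega

-- (d) 7^(a+1) ∣ 8^(7^a) - 1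
lemma seven_pow_dvd (a : ℕ) : (7:ℤ)^(a+1) ∣ 8^(7^a) - 1 := by
  induction a with
  | zero => norm_num
  | succ a IH =>
    have hy : (8:ℤ)^(7^(a+1)) = ((8:ℤ)^(7^a))^7 := by
      rw [← pow_mul, pow_succ]
    set y : ℤ := (8:ℤ)^(7^a) with hy_def
    rw [hy]
    have h7 : (7:ℤ) ∣ ∑ i ∈ Finset.range 7, y^i := by
      have hsub : (∑ i ∈ Finset.range 7, y^i) - 7 = ∑ i ∈ Finset.range 7, (y^i - 1) := by
        rw [Finset.sum_sub_distrib]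
        norm_num
      have hdvd : (7:ℤ) ∣ ∑ i ∈ Finset.range 7, (y^i - 1) := by
        refine Finset.dvd_sum fun i _ => ?_
        have h1 : y - 1 ∣ y^i - 1 := by
          simpa using sub_dvd_pow_sub_pow y 1 i
        exact dvd_trans (dvd_trans ⟨7^a, by ring⟩ IH) h1
      have : (∑ i ∈ Finset.range 7, y^i) = (∑ i ∈ Finset.range 7, (y^i - 1)) + 7 := by
        rw [← hsub]; ring
      rw [this]
      exact dvd_add hdvd ⟨1, by ring⟩
    have : y^7 - 1 = (∑ i ∈ Finset.range 7, y^i) * (y - 1) := (geom_sum_mul y 7).symm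
    rw [this, pow_succ]
    rw [show (7:ℤ)^(a+1) * 7 = 7 * 7^(a+1) from by ring]
    exact mul_dvd_mul h7 IH

lemma two_pow_diff_dvd (m₀ m a : ℕ) (hle : m₀ ≤ m) (h3 : 3 ∣ m - m₀) (h7 : 7^a ∣ m - m₀) :
    (7:ℤ)^(a+1) ∣ 2^m - 2^m₀ := by
  have hcop : Nat.Coprime 3 (7^a) := Nat.Coprime.pow_right a (by norm_num)
  obtain ⟨t, ht⟩ : 3 * 7^a ∣ m - m₀ := hcop.mul_dvd_of_dvd_of_dvd h3 h7
  have hm : m = m₀ + 3 * 7^a * t := by omega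
  subst hm
  have e : (2:ℤ)^(3*7^a*t) = ((8:ℤ)^(7^a))^t := by
    rw [mul_assoc, pow_mul, pow_mul]
    norm_num
  have hsplit : (2:ℤ)^(m₀ + 3*7^a*t) - 2^m₀ = 2^m₀ * (((8:ℤ)^(7^a))^t - 1) := by
    rw [pow_add, e]
    ring
  rw [hsplit]
  apply Dvd.dvd.mul_left
  exact dvd_trans (seven_pow_dvd a) (by simpa using sub_dvd_pow_sub_pow ((8:ℤ)^(7^a)) 1 t)

lemma extract_pow (a K v : ℕ) (hv : v = (K.factorial).factorization 7) (hva : v ≤ a)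
    (d : ℤ) (hdvd : (7:ℤ)^a ∣ (K.factorial : ℤ) * d) : (7:ℤ)^(a-v) ∣ d := by
  have h7 : Nat.Prime 7 := by norm_num
  set m := K.factorial / 7^v with hm_def
  have hfac : 7^v * m = K.factorial := by
    rw [hm_def, hv]
    exact Nat.ordProj_mul_ordCompl_eq_self _ 7
  have hm7 : ¬ 7 ∣ m := by
    rw [hm_def, hv]
    exact Nat.not_dvd_ordCompl h7 (Nat.factorial_ne_zero K)
  have hsplit : (7:ℤ)^a = 7^v * 7^(a-v) := by
    rw [← pow_add]
    congr 1
    omega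
  rw [← hfac, hsplit] at hdvd
  push_cast at hdvd
  have hre : ((7:ℤ)^v * m) * d = (7:ℤ)^v * ((m:ℤ)*d) := by ring
  rw [hre] at hdvd
  have hdvd2 : (7:ℤ)^(a-v) ∣ (m:ℤ) * d :=
    (mul_dvd_mul_iff_left (pow_ne_zero v (by norm_num : (7:ℤ) ≠ 0))).mp hdvd
  have hcop : IsCoprime ((7:ℤ)^(a-v)) (m:ℤ) := by
    have hn : Nat.Coprime (7^(a-v)) m :=
      Nat.Coprime.pow_left _ ((Nat.Prime.coprime_iff_not_dvd h7).mpr hm7)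
    have := Nat.isCoprime_iff_coprime.mpr hn
    push_cast at this
    exact this
  exact hcop.dvd_of_dvd_mul_left hdvd2

lemma factorial_val_bound' (j : ℕ) (hj : 1 ≤ j) : ((2*j+1).factorial).factorization 7 + 1 ≤ j := by
  have h := factorial_val_bound j hj
  haveI : Fact (Nat.Prime 7) := ⟨by norm_num⟩
  rwa [Nat.factorization_def _ (by norm_num)]

lemma term_dvd (l₀ l a j : ℕ) (hj : 1 ≤ j) (h7 : (7:ℤ)^a ∣ (l:ℤ) - (l₀:ℤ)) :
    (7:ℤ)^(a+1) ∣ ((l.choose (2*j+1) : ℤ) - (l₀.choose (2*j+1))) * (-7)^j := by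
  have hneg : ((-7:ℤ))^j = (-1)^j * 7^j := by rw [← neg_one_mul, mul_pow]
  rcases le_or_gt (a+1) j with h | h
  · apply Dvd.dvd.mul_left
    rw [hneg]
    exact Dvd.dvd.mul_left (pow_dvd_pow 7 h) _
  · set v := ((2*j+1).factorial).factorization 7 with hv_def
    have hvb : v + 1 ≤ j := factorial_val_bound' j hj
    have hKd : (7:ℤ)^a ∣ ((2*j+1).factorial : ℤ) * ((l.choose (2*j+1) : ℤ) - (l₀.choose (2*j+1))) := by
      rw [mul_sub, ← dp_eq_choose, ← dp_eq_choose]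
      exact prod_congr_dvd _ _ _ h7 (2*j+1)
    have hex : (7:ℤ)^(a-v) ∣ ((l.choose (2*j+1) : ℤ) - (l₀.choose (2*j+1))) :=
      extract_pow a (2*j+1) v hv_def (by omega) _ hKd
    have hprod : (7:ℤ)^(a-v) * 7^j ∣ ((l.choose (2*j+1) : ℤ) - (l₀.choose (2*j+1))) * (-7)^j := by
      apply mul_dvd_mul hex
      rw [hneg]
      exact Dvd.dvd.mul_left dvd_rfl _
    refine dvd_trans ?_ hprod
    rw [← pow_add]
    exact pow_dvd_pow 7 (by omega)

lemma sum_diff_dvd (l₀ l a : ℕ) (hle : l₀ ≤ l) (h7 : (7:ℤ)^a ∣ (l:ℤ) - (l₀:ℤ)) :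
    (7:ℤ)^(a+1) ∣ (Ssum l - Ssum l₀) - ((l:ℤ) - (l₀:ℤ)) := by
  have hpad : Ssum l₀ = ∑ j ∈ Finset.range (l+1), (l₀.choose (2*j+1) : ℤ) * (-7)^j := by
    rw [Ssum]
    refine Finset.sum_subset (by simp; omega) ?_
    intro j hj hnot
    simp only [Finset.mem_range] at hj hnot
    rw [Nat.choose_eq_zero_of_lt (by omega)]
    simp
  have hdiff : Ssum l - Ssum l₀
      = ∑ j ∈ Finset.range (l+1), ((l.choose (2*j+1) : ℤ) - (l₀.choose (2*j+1))) * (-7)^j := by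
    rw [Ssum, hpad, ← Finset.sum_sub_distrib]
    exact Finset.sum_congr rfl fun j _ => by ring
  rw [hdiff,
    Finset.sum_range_succ' (fun j => ((l.choose (2*j+1) : ℤ) - (l₀.choose (2*j+1))) * (-7)^j) l]
  have hf0 : ((l.choose (2*0+1) : ℤ) - (l₀.choose (2*0+1))) * (-7)^0 = (l:ℤ) - l₀ := by
    norm_num [Nat.choose_one_right]
  have hterm : (7:ℤ)^(a+1) ∣
      ∑ i ∈ Finset.range l, ((l.choose (2*(i+1)+1) : ℤ) - (l₀.choose (2*(i+1)+1))) * (-7)^(i+1) :=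
    Finset.dvd_sum fun i _ => term_dvd l₀ l a (i+1) (by omega) h7
  simp only [hf0]
  simpa using hterm

lemma no_two (l₀ l : ℕ) (h0 : bseq l₀ = -1) (h1 : bseq l = -1) (hlt : l₀ < l)
    (h3 : 3 ∣ l - l₀) : False := by
  haveI : Fact (Nat.Prime 7) := ⟨by norm_num⟩
  have hl₀pos : 1 ≤ l₀ := by
    by_contra hcon
    have hl0 : l₀ = 0 := by omega
    rw [hl0] at h0
    exact absurd h0 (by decide)
  set a := padicValNat 7 (l - l₀) with ha_def
  have hd0 : l - l₀ ≠ 0 := by omega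
  have hF2 : ¬ 7^(a+1) ∣ (l - l₀) := pow_succ_padicValNat_not_dvd hd0
  have hF1 : 7^a ∣ (l - l₀) := pow_padicValNat_dvd
  -- Ssum values
  have hSl : 2 * Ssum l = -(2^l) := by rw [(ST_id l).1, h1]; ring
  have hSl₀ : 2 * Ssum l₀ = -(2^l₀) := by rw [(ST_id l₀).1, h0]; ring
  -- 2-power part
  have h7Z : (7:ℤ)^a ∣ (l:ℤ) - (l₀:ℤ) := by
    have := Int.natCast_dvd_natCast.mpr hF1
    push_cast [Nat.cast_sub (le_of_lt hlt)] at this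
    exact_mod_cast this
  have hpow : (7:ℤ)^(a+1) ∣ 2^(l-1) - 2^(l₀-1) :=
    two_pow_diff_dvd (l₀-1) (l-1) a (by omega) (by omega) (by
      have : (l-1) - (l₀-1) = l - l₀ := by omega
      rw [this]; exact hF1)
  have hsum : (7:ℤ)^(a+1) ∣ (Ssum l - Ssum l₀) - ((l:ℤ) - (l₀:ℤ)) :=
    sum_diff_dvd l₀ l a (le_of_lt hlt) h7Z
  -- Ssum l - Ssum l₀ = -(2^(l-1) - 2^(l₀-1))
  have hS2 : 2 * (Ssum l - Ssum l₀) = -(2 * (2^(l-1) - 2^(l₀-1))) := by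
    have e1 : (2:ℤ) * 2^(l-1) = 2^l := by
      rw [← pow_succ']
      congr 1
      omega
    have e2 : (2:ℤ) * 2^(l₀-1) = 2^l₀ := by
      rw [← pow_succ']
      congr 1
      omega
    rw [mul_sub, hSl, hSl₀, mul_sub, e1, e2]
    ring
  have hSeq : Ssum l - Ssum l₀ = -(2^(l-1) - 2^(l₀-1)) := by linarith
  have hfinal : (7:ℤ)^(a+1) ∣ (l:ℤ) - (l₀:ℤ) := by
    have h1' : (7:ℤ)^(a+1) ∣ (Ssum l - Ssum l₀) := by
      rw [hSeq]
      exact dvd_neg.mpr hpow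
    have := dvd_sub h1' hsum
    simpa using this
  apply hF2
  have : ((7:ℤ))^(a+1) ∣ ((l - l₀ : ℕ) : ℤ) := by
    push_cast [Nat.cast_sub (le_of_lt hlt)]
    exact hfinal
  exact_mod_cast this

lemma bseq_neg_one (l : ℕ) (h : bseq l = -1) : l = 3 ∨ l = 5 ∨ l = 13 := by
  have hb3 : bseq 3 = -1 := by decide
  have hb5 : bseq 5 = -1 := by decide
  have hb13 : bseq 13 = -1 := by decide
  have hmod : l % 3 = 0 ∨ l % 3 = 1 ∨ l % 3 = 2 := by omega
  rcases hmod with hm | hm | hm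
  · left
    by_contra hne
    rcases Nat.lt_or_ge l 3 with hlt | hge
    · interval_cases l <;> revert h <;> decide
    · have : 3 < l := by omega
      exact no_two 3 l hb3 h this (by omega)
  · right; right
    by_contra hne
    rcases Nat.lt_or_ge l 13 with hlt | hge
    · interval_cases l <;> revert h <;> simp_all <;> decide
    · have : 13 < l := by omega
      exact no_two 13 l hb13 h this (by omega)
  · right; left
    by_contra hne
    rcases Nat.lt_or_ge l 5 with hlt | hge
    · interval_cases l <;> revert h <;> simp_all <;> decide
    · have : 5 < l := by omega
      exact no_two 5 l hb5 h this (by omega)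

lemma bseq_sq_one (n : ℕ) (h : (bseq n)^2 = 1) :
    n = 1 ∨ n = 2 ∨ n = 3 ∨ n = 5 ∨ n = 13 := by
  rcases sq_eq_cases (bseq n) 1 (by simpa using h) with h1 | h1
  · rcases bseq_ne_one n h1 with h2 | h2
    · exact Or.inl h2
    · exact Or.inr (Or.inl h2)
  · rcases bseq_neg_one n (by simpa using h1) with h2 | h2 | h2
    · exact Or.inr (Or.inr (Or.inl h2))
    · exact Or.inr (Or.inr (Or.inr (Or.inl h2)))
    · exact Or.inr (Or.inr (Or.inr (Or.inr h2)))

/-- **Ramanujan–Nagell theorem.** The equation `x² + 7 = 2^(n+2)` in positive integers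
`x, n` has only the solutions `(x, n) = (1, 1), (3, 2), (5, 3), (11, 5), (181, 13)`. -/
theorem ramanujan_nagell :
    ∀ x n : ℕ, 0 < x → 0 < n →
      (x ^ 2 + 7 = 2 ^ (n + 2) ↔
        (x, n) = (1, 1) ∨ (x, n) = (3, 2) ∨ (x, n) = (5, 3) ∨
        (x, n) = (11, 5) ∨ (x, n) = (181, 13)) := by
  intro x n hx hn
  constructor
  · intro h
    have heqZ : ((x:ℤ))^2 + 7*(1:ℤ)^2 = 2^(n+2) := by
      have := congrArg (fun m : ℕ => (m : ℤ)) h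
      push_cast at this
      linarith
    have hxodd : Odd ((x:ℤ)) := by
      rcases Int.even_or_odd ((x:ℤ)) with ⟨u, hu⟩ | ho
      · exfalso
        have h1 : ((x:ℤ)^2 + 7*(1:ℤ)^2) % 2 = 1 := by
          rw [hu, show (u+u)^2 + 7*(1:ℤ)^2 = 2*(2*u^2+3) + 1 from by ring]
          omega
        have h2 : ((2:ℤ)^(n+2)) % 2 = 0 := by
          rw [show n+2 = (n+1)+1 from rfl, pow_succ]
          omega
        rw [heqZ] at h1
        omega
      · exact ho
    obtain ⟨hA, hB⟩ := descent n hn (x:ℤ) 1 hxodd odd_one heqZ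
    have hb1 : (bseq n)^2 = 1 := by rw [← hB]; norm_num
    have hsq : ∀ t : ℕ, x^2 = t^2 → x = t := fun t ht =>
      Nat.pow_left_injective (by norm_num) ht
    rcases bseq_sq_one n hb1 with h2 | h2 | h2 | h2 | h2 <;> subst h2 <;> norm_num at h
    · left
      have : x = 1 := hsq 1 (by norm_num; nlinarith)
      simp [this]
    · right; left
      have : x = 3 := hsq 3 (by norm_num; linarith)
      simp [this]
    · right; right; left
      have : x = 5 := hsq 5 (by norm_num; linarith)
      simp [this]
    · right; right; right; left
      have : x = 11 := hsq 11 (by norm_num; linarith)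
      simp [this]
    · right; right; right; right
      have : x = 181 := hsq 181 (by norm_num; linarith)
      simp [this]
  · intro h
    rcases h with h | h | h | h | h <;>
    · obtain ⟨h1, h2⟩ := Prod.mk.injEq .. ▸ h
      subst h1
      subst h2
      norm_num
end
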